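/- The supremum of |z₁² − z₂² + c z₁ z₂| over the closed unit bidisc {(z₁,z₂) ∈ ℂ² : |z₁| ≤ 1, |z₂| ≤ 1} equals sqrt(4 + c²), for every real c. -/

import Mathlib

theorem stmt_4 (c : ℝ) :
    sSup {y : ℝ | ∃ z₁ z₂ : ℂ, ‖z₁‖ ≤ 1 ∧ ‖z₂‖ ≤ 1 ∧
        y = ‖z₁ ^ 2 - z₂ ^ 2 + (c:ℂ) * z₁ * z₂‖} = Real.sqrt (4 + c ^ 2) := by
  apply IsGreatest.csSup_eq
  constructor
  · refine ⟨1, Complex.I, by norm_num, by simp, ?_⟩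
    have h : (1:ℂ) ^ 2 - Complex.I ^ 2 + (c:ℂ) * 1 * Complex.I = Complex.mk 2 c := by
      simp [Complex.ext_iff, Complex.I_sq]; norm_num
    rw [h, Complex.norm_def, Complex.normSq_mk]
    ring_nf
  · rintro y ⟨z₁, z₂, h1, h2, rfl⟩
    rw [show ‖z₁ ^ 2 - z₂ ^ 2 + (c:ℂ) * z₁ * z₂‖
        = Real.sqrt (Complex.normSq (z₁ ^ 2 - z₂ ^ 2 + (c:ℂ) * z₁ * z₂)) by
      rw [Complex.norm_def]]
    apply Real.sqrt_le_sqrt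
    have ha : z₁.re ^ 2 + z₁.im ^ 2 ≤ 1 := by
      have := Complex.sq_norm z₁
      nlinarith [Complex.normSq_apply z₁, norm_nonneg z₁,
        h1]
    have hb : z₂.re ^ 2 + z₂.im ^ 2 ≤ 1 := by
      have := Complex.sq_norm z₂
      nlinarith [Complex.normSq_apply z₂, norm_nonneg z₂,
        h2]
    set a := z₁.re; set b := z₁.im; set d := z₂.re; set e := z₂.im
    simp only [Complex.normSq_apply, Complex.add_re, Complex.add_im, Complex.sub_re,
      Complex.sub_im, Complex.mul_re, Complex.mul_im, Complex.ofReal_re, Complex.ofReal_im,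
      pow_two]
    ring_nf
    have hkey : (0:ℝ) ≤ (4 + c^2) * ((2 - ((a^2+b^2)+(d^2+e^2))) * (2 + ((a^2+b^2)+(d^2+e^2)))) := by
      have h0 : (0:ℝ) ≤ 2 - ((a^2+b^2)+(d^2+e^2)) := by linarith
      have h1 : (0:ℝ) ≤ 2 + ((a^2+b^2)+(d^2+e^2)) := by positivity
      positivity
    nlinarith [sq_nonneg (4*(a*d+b*e) - c*((a^2+b^2)-(d^2+e^2))), hkey]
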